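/- For all real numbers a ≥ b > 0, the quantity N := (a/b)·sinh(a)·sinh(b) − cosh(a)·cosh(b) satisfies N > −1 whenever a > b, and N = −1 is never attained for a > b > 0; more precisely, with ξ = a + b and η = a − b one has N = (η·cosh(ξ) − ξ·cosh(η))/(ξ − η) > −1. -/

import Mathlib

lemma aux_p (x : ℝ) (hx : 0 < x) : Real.cosh x - 1 < x * Real.sinh x := by
  have hmono : StrictMonoOn (fun y : ℝ => y * Real.sinh y - Real.cosh y + 1) (Set.Ici 0) := by
    apply strictMonoOn_of_deriv_pos (convex_Ici 0)
    · fun_prop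
    · intro y hy
      rw [interior_Ici] at hy
      have hy' : (0:ℝ) < y := hy
      have h1 : HasDerivAt (fun y : ℝ => y * Real.sinh y - Real.cosh y + 1)
          (1 * Real.sinh y + y * Real.cosh y - Real.sinh y) y :=
        ((hasDerivAt_id y).mul (Real.hasDerivAt_sinh y)).sub
          (Real.hasDerivAt_cosh y) |>.add_const 1
      rw [h1.deriv]
      have hc := Real.cosh_pos y
      nlinarith [mul_pos hy' hc]
  have := hmono (Set.self_mem_Ici) (Set.mem_Ici.mpr hx.le) hx
  simp at this
  linarith

lemma aux_mono : StrictMonoOn (fun x : ℝ => (Real.cosh x - 1) / x) (Set.Ioi 0) := by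
  apply strictMonoOn_of_deriv_pos (convex_Ioi 0)
  · apply ContinuousOn.div (by fun_prop) continuousOn_id
    intro x hx; exact ne_of_gt hx
  · intro x hx
    rw [interior_Ioi] at hx
    have hx0 : (x : ℝ) ≠ 0 := ne_of_gt hx
    have h1 : HasDerivAt (fun x : ℝ => (Real.cosh x - 1) / x)
        ((Real.sinh x * x - (Real.cosh x - 1) * 1) / x ^ 2) x :=
      ((Real.hasDerivAt_cosh x).sub_const 1).div (hasDerivAt_id x) hx0
    rw [h1.deriv]
    have := aux_p x hx
    have hx2 : (0:ℝ) < x ^ 2 := by positivity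
    apply div_pos _ hx2
    nlinarith

theorem N_gt_neg_one (a b : ℝ) (hb : 0 < b) (hab : b < a) :
    ((a / b) * Real.sinh a * Real.sinh b - Real.cosh a * Real.cosh b
        = ((a - b) * Real.cosh (a + b) - (a + b) * Real.cosh (a - b)) / ((a + b) - (a - b))) ∧
      (a / b) * Real.sinh a * Real.sinh b - Real.cosh a * Real.cosh b > -1 := by
  have hb0 : b ≠ 0 := ne_of_gt hb
  have hiden : (a / b) * Real.sinh a * Real.sinh b - Real.cosh a * Real.cosh b
      = ((a - b) * Real.cosh (a + b) - (a + b) * Real.cosh (a - b)) / ((a + b) - (a - b)) := by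
    rw [Real.cosh_add, Real.cosh_sub]
    field_simp
    have hbb : b * b⁻¹ = 1 := mul_inv_cancel₀ hb0
    linear_combination (b * Real.cosh a * Real.cosh b - a * Real.sinh a * Real.sinh b) * hbb
  refine ⟨hiden, ?_⟩
  rw [hiden]
  have hη : (0:ℝ) < a - b := by linarith
  have hξ : (0:ℝ) < a + b := by linarith
  have hlt : a - b < a + b := by linarith
  have key := aux_mono (Set.mem_Ioi.mpr hη) (Set.mem_Ioi.mpr hξ) hlt
  simp only at key
  rw [div_lt_div_iff₀ hη hξ] at key
  have h2b : (0:ℝ) < (a + b) - (a - b) := by linarith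
  rw [gt_iff_lt, lt_div_iff₀ h2b]
  nlinarith
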